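/- Let A and B be complex n×n matrices with rank(A − B) = k. Then for every λ ∈ ℂ and every m ≥ 1, |η_m(A, λ) − η_m(B, λ)| ≤ k, where η_m(M, λ) = dim ker(λI − M)^m − dim ker(λI − M)^{m−1}. -/

import Mathlib

open Module Submodule LinearMap

section aux

variable {V : Type*} [AddCommGroup V] [Module ℂ V] [FiniteDimensional ℂ V]

/-- rank–nullity for a map restricted to a submodule. -/
lemma aux_h1 (h : V →ₗ[ℂ] V) (S : Submodule ℂ V) :
    finrank ℂ (S.map h) + finrank ℂ (S ⊓ ker h : Submodule ℂ V) = finrank ℂ S := by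
  have h2 := LinearMap.finrank_range_add_finrank_ker (h.domRestrict S)
  rw [range_domRestrict, ker_domRestrict] at h2
  have e : (ker h).comap S.subtype = (S ⊓ ker h).comap S.subtype := by
    rw [comap_inf, comap_subtype_self, top_inf_eq]
  rw [e, (comapSubtypeEquivOfLe (inf_le_left : S ⊓ ker h ≤ S)).finrank_eq] at h2
  exact h2

lemma aux_h2 {G G' R : Submodule ℂ V} (hGG : G ≤ G') :
    finrank ℂ (G' ⊓ R : Submodule ℂ V) + finrank ℂ G ≤
      finrank ℂ (G ⊓ R : Submodule ℂ V) + finrank ℂ G' := by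
  have hs := Submodule.finrank_sup_add_finrank_inf_eq (G' ⊓ R) G
  have e1 : (G' ⊓ R) ⊓ G = G ⊓ R := by
    rw [inf_right_comm, inf_eq_right.2 hGG]
  have e2 : finrank ℂ ((G' ⊓ R) ⊔ G : Submodule ℂ V) ≤ finrank ℂ G' :=
    Submodule.finrank_mono (sup_le inf_le_left hGG)
  rw [e1] at hs
  omega

variable (f : V →ₗ[ℂ] V) (W : Submodule ℂ V)

lemma pow_succ_apply' (j : ℕ) (x : V) : (f ^ (j + 1)) x = f ((f ^ j) x) := by
  rw [pow_succ', Module.End.mul_apply]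

lemma pow_succ_apply'' (j : ℕ) (x : V) : (f ^ (j + 1)) x = (f ^ j) (f x) := by
  rw [pow_succ, Module.End.mul_apply]

lemma ker_pow_le (m : ℕ) : ker (f ^ m) ≤ ker (f ^ (m + 1)) := by
  intro x hx
  rw [mem_ker] at *
  rw [pow_succ_apply', hx, map_zero]

lemma range_pow_le (j : ℕ) : range (f ^ (j + 1)) ≤ range (f ^ j) := by
  rintro _ ⟨x, rfl⟩
  exact ⟨f x, (pow_succ_apply'' f j x).symm⟩

lemma map_pow_le_range (j : ℕ) : W.map (f ^ j) ≤ range (f ^ j) := map_le_range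

lemma map_map_pow (j : ℕ) : (W.map (f ^ j)).map f = W.map (f ^ (j + 1)) := by
  rw [← Submodule.map_comp]
  congr 1
  ext x
  exact (pow_succ_apply' f j x).symm

lemma map_ker_pow (m : ℕ) :
    (ker (f ^ (m + 1))).map (f ^ m) = ker f ⊓ range (f ^ m) := by
  ext y
  simp only [Submodule.mem_map, Submodule.mem_inf, LinearMap.mem_ker, LinearMap.mem_range]
  constructor
  · rintro ⟨x, hx, rfl⟩
    exact ⟨by rw [← pow_succ_apply' f m x]; exact hx, ⟨x, rfl⟩⟩
  · rintro ⟨h1, x, rfl⟩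
    exact ⟨x, by rw [pow_succ_apply']; exact h1, rfl⟩

lemma map_ker_pow_inf (m : ℕ) :
    ((ker (f ^ (m + 1)) ⊓ W)).map (f ^ m) = ker f ⊓ W.map (f ^ m) := by
  ext y
  simp only [Submodule.mem_map, Submodule.mem_inf, LinearMap.mem_ker]
  constructor
  · rintro ⟨x, ⟨hx1, hx2⟩, rfl⟩
    exact ⟨by rw [← pow_succ_apply' f m x]; exact hx1, ⟨x, hx2, rfl⟩⟩
  · rintro ⟨h1, x, hx, rfl⟩
    exact ⟨x, ⟨by rw [pow_succ_apply']; exact h1, hx⟩, rfl⟩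

/-- decomposition of `ker f^(m+1)` -/
lemma dim_ker_succ (m : ℕ) :
    finrank ℂ (ker f ⊓ range (f ^ m) : Submodule ℂ V) + finrank ℂ (ker (f ^ m)) =
      finrank ℂ (ker (f ^ (m + 1))) := by
  have := aux_h1 (f ^ m) (ker (f ^ (m + 1)))
  rw [map_ker_pow, inf_eq_right.2 (ker_pow_le f m)] at this
  exact this

lemma dim_ker_succ_inf (m : ℕ) :
    finrank ℂ (ker f ⊓ W.map (f ^ m) : Submodule ℂ V) +
        finrank ℂ (ker (f ^ m) ⊓ W : Submodule ℂ V) =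
      finrank ℂ (ker (f ^ (m + 1)) ⊓ W : Submodule ℂ V) := by
  have := aux_h1 (f ^ m) (ker (f ^ (m + 1)) ⊓ W)
  rw [map_ker_pow_inf] at this
  have e : (ker (f ^ (m + 1)) ⊓ W) ⊓ ker (f ^ m) = ker (f ^ m) ⊓ W := by
    rw [inf_right_comm, inf_eq_right.2 (ker_pow_le f m)]
  rw [e] at this
  exact this

/-- the X-space computation -/
lemma dim_X (j : ℕ) :
    finrank ℂ ((W.map (f ^ j)).comap f ⊓ range (f ^ j) : Submodule ℂ V) =
      finrank ℂ (W.map (f ^ j) ⊓ range (f ^ (j + 1)) : Submodule ℂ V) +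
        finrank ℂ (ker f ⊓ range (f ^ j) : Submodule ℂ V) := by
  have h := aux_h1 f ((W.map (f ^ j)).comap f ⊓ range (f ^ j))
  have e1 : ((W.map (f ^ j)).comap f ⊓ range (f ^ j)).map f =
      W.map (f ^ j) ⊓ range (f ^ (j + 1)) := by
    ext z
    simp only [Submodule.mem_map, Submodule.mem_inf, Submodule.mem_comap,
      LinearMap.mem_range]
    constructor
    · rintro ⟨x, ⟨hx1, x', rfl⟩, rfl⟩
      exact ⟨hx1, ⟨x', pow_succ_apply' f j x'⟩⟩
    · rintro ⟨hz, v, rfl⟩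
      exact ⟨(f ^ j) v, ⟨by rw [← pow_succ_apply']; exact hz, ⟨v, rfl⟩⟩,
        (pow_succ_apply' f j v).symm⟩
  have e2 : ((W.map (f ^ j)).comap f ⊓ range (f ^ j)) ⊓ ker f =
      ker f ⊓ range (f ^ j) := by
    ext x
    simp only [Submodule.mem_inf, Submodule.mem_comap, LinearMap.mem_ker]
    constructor
    · rintro ⟨⟨_, hx2⟩, hx3⟩
      exact ⟨hx3, hx2⟩
    · rintro ⟨hx1, hx2⟩
      exact ⟨⟨by rw [hx1]; exact zero_mem _, hx2⟩, hx1⟩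
  rw [e1, e2] at h
  omega

/-- the (†') descent inequality -/
lemma dagger (j : ℕ) :
    finrank ℂ ((W.map (f ^ (j + 1))).comap f ⊓ range (f ^ (j + 1)) : Submodule ℂ V) +
        finrank ℂ (W.map (f ^ j)) ≤
      finrank ℂ ((W.map (f ^ j)).comap f ⊓ range (f ^ j) : Submodule ℂ V) +
        finrank ℂ (W.map (f ^ (j + 1))) := by
  -- S ≤ (G ⊔ H) ⊓ range (f^(j+1))
  have hS : (W.map (f ^ (j + 1))).comap f ⊓ range (f ^ (j + 1)) ≤
      (W.map (f ^ j) ⊔ (ker f ⊓ range (f ^ j))) ⊓ range (f ^ (j + 1)) := by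
    intro x hx
    rw [Submodule.mem_inf] at hx
    obtain ⟨hx1, hx2⟩ := hx
    rw [Submodule.mem_inf]
    refine ⟨?_, hx2⟩
    rw [Submodule.mem_comap, ← map_map_pow] at hx1
    obtain ⟨u, hu, huf⟩ := hx1
    have hker : x - u ∈ (ker f ⊓ range (f ^ j) : Submodule ℂ V) := by
      rw [Submodule.mem_inf]
      constructor
      · rw [mem_ker, map_sub, huf, sub_self]
      · exact sub_mem (range_pow_le f j hx2) (map_pow_le_range f W j hu)
    have hxx : x = u + (x - u) := by abel
    rw [hxx]
    exact add_mem_sup hu hker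
  have c1 : finrank ℂ ((W.map (f ^ (j + 1))).comap f ⊓ range (f ^ (j + 1)) : Submodule ℂ V) ≤
      finrank ℂ ((W.map (f ^ j) ⊔ (ker f ⊓ range (f ^ j))) ⊓ range (f ^ (j + 1)) :
        Submodule ℂ V) :=
    Submodule.finrank_mono hS
  have c2 := aux_h2 (R := range (f ^ (j + 1)))
    (le_sup_left : W.map (f ^ j) ≤ W.map (f ^ j) ⊔ (ker f ⊓ range (f ^ j)))
  have c3 := Submodule.finrank_sup_add_finrank_inf_eq (W.map (f ^ j))
    (ker f ⊓ range (f ^ j))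
  have hGH : W.map (f ^ j) ⊓ (ker f ⊓ range (f ^ j)) = W.map (f ^ j) ⊓ ker f := by
    rw [inf_comm (ker f), ← inf_assoc, inf_eq_left.2 (map_pow_le_range f W j)]
  have b : finrank ℂ (W.map (f ^ (j + 1))) +
      finrank ℂ (W.map (f ^ j) ⊓ ker f : Submodule ℂ V) = finrank ℂ (W.map (f ^ j)) := by
    have hh := aux_h1 f (W.map (f ^ j))
    rwa [map_map_pow] at hh
  have a := dim_X f W j
  rw [hGH] at c3
  omega

/-- the descent: statement T(j) -/
lemma Tlem (hW : W.map f ≤ W) (m : ℕ) :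
    ∀ i j, j + i = m →
    finrank ℂ (ker f ⊓ range (f ^ m) : Submodule ℂ V) + finrank ℂ (W.map (f ^ j)) ≤
      finrank ℂ (ker f ⊓ W.map (f ^ m) : Submodule ℂ V) +
        finrank ℂ ((W.map (f ^ j)).comap f ⊓ range (f ^ j) : Submodule ℂ V) := by
  intro i
  induction i with
  | zero =>
      intro j hj
      rw [Nat.add_zero] at hj
      subst hj
      -- base case T(m)
      have hs := Submodule.finrank_sup_add_finrank_inf_eq
        (ker f ⊓ range (f ^ j) : Submodule ℂ V) (W.map (f ^ j))
      have e1 : (ker f ⊓ range (f ^ j)) ⊓ W.map (f ^ j) = ker f ⊓ W.map (f ^ j) := by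
        rw [inf_assoc, inf_eq_right.2 (map_pow_le_range f W j)]
      have hBinv : (W.map (f ^ j)).map f ≤ W.map (f ^ j) := by
        rw [map_map_pow, pow_succ, Module.End.mul_eq_comp, Submodule.map_comp]
        exact Submodule.map_mono hW
      have e2 : (ker f ⊓ range (f ^ j)) ⊔ W.map (f ^ j) ≤
          (W.map (f ^ j)).comap f ⊓ range (f ^ j) := by
        apply sup_le
        · intro x hx
          rw [Submodule.mem_inf] at hx
          obtain ⟨hx1, hx2⟩ := hx
          rw [mem_ker] at hx1
          rw [Submodule.mem_inf, Submodule.mem_comap, hx1]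
          exact ⟨zero_mem _, hx2⟩
        · intro x hx
          rw [Submodule.mem_inf, Submodule.mem_comap]
          exact ⟨hBinv ⟨x, hx, rfl⟩, map_pow_le_range f W j hx⟩
      have e3 : finrank ℂ ((ker f ⊓ range (f ^ j)) ⊔ W.map (f ^ j) : Submodule ℂ V) ≤
          finrank ℂ ((W.map (f ^ j)).comap f ⊓ range (f ^ j) : Submodule ℂ V) :=
        Submodule.finrank_mono e2
      rw [e1] at hs
      omega
  | succ i ih =>
      intro j hj
      have hj1 : (j + 1) + i = m := by omega
      have t1 := ih (j + 1) hj1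
      have t2 := dagger f W j
      omega

/-- KEY lemma -/
lemma key (hW : W.map f ≤ W) (m : ℕ) :
    finrank ℂ (ker (f ^ (m + 1))) + finrank ℂ (ker (f ^ m) ⊓ W : Submodule ℂ V) +
        finrank ℂ W ≤
      finrank ℂ (ker (f ^ m)) + finrank ℂ (ker (f ^ (m + 1)) ⊓ W : Submodule ℂ V) +
        finrank ℂ (W.comap f) := by
  have t0 := Tlem f W hW m m 0 (by omega)
  have e0 : W.map (f ^ 0) = W := by rw [pow_zero, Module.End.one_eq_id, Submodule.map_id]
  have er : range (f ^ 0 : V →ₗ[ℂ] V) = ⊤ := by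
    rw [pow_zero, Module.End.one_eq_id, range_id]
  rw [e0, er, inf_top_eq] at t0
  have e1 := dim_ker_succ f m
  have e2 := dim_ker_succ_inf f W m
  omega

/-- trivial direction: restriction to a subspace only decreases η -/
lemma easy (m : ℕ) :
    finrank ℂ (ker (f ^ (m + 1)) ⊓ W : Submodule ℂ V) + finrank ℂ (ker (f ^ m)) ≤
      finrank ℂ (ker (f ^ m) ⊓ W : Submodule ℂ V) + finrank ℂ (ker (f ^ (m + 1))) := by
  have e1 := dim_ker_succ f m
  have e2 := dim_ker_succ_inf f W m
  have mono : finrank ℂ (ker f ⊓ W.map (f ^ m) : Submodule ℂ V) ≤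
      finrank ℂ (ker f ⊓ range (f ^ m) : Submodule ℂ V) :=
    Submodule.finrank_mono (inf_le_inf_left _ (map_pow_le_range f W m))
  omega

end aux

section twoops

variable {V : Type*} [AddCommGroup V] [Module ℂ V] [FiniteDimensional ℂ V]
variable (f g : V →ₗ[ℂ] V)

/-- the largest `f`-invariant subspace of `ker (f - g)` -/
noncomputable def Wfg : Submodule ℂ V := ⨅ i : ℕ, ker ((f - g) ∘ₗ f ^ i)

lemma mem_Wfg {x : V} : x ∈ Wfg f g ↔ ∀ i : ℕ, (f - g) ((f ^ i) x) = 0 := by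
  simp [Wfg, Submodule.mem_iInf, mem_ker]

lemma Wfg_map_f : (Wfg f g).map f ≤ Wfg f g := by
  rintro _ ⟨x, hx, rfl⟩
  rw [SetLike.mem_coe, mem_Wfg] at hx
  rw [mem_Wfg]
  intro i
  have := hx (i + 1)
  rwa [pow_succ_apply''] at this

lemma Wfg_pow_eq : ∀ (x : V), x ∈ Wfg f g → ∀ i : ℕ, (f ^ i) x = (g ^ i) x := by
  intro x hx i
  induction i with
  | zero => simp
  | succ i ih =>
      rw [mem_Wfg] at hx
      have h0 := hx i
      rw [LinearMap.sub_apply, sub_eq_zero] at h0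
      rw [pow_succ_apply' g, ← ih, ← h0, ← pow_succ_apply' f]

lemma Wfg_map_g : (Wfg f g).map g ≤ Wfg f g := by
  rintro _ ⟨x, hx, rfl⟩
  have h0 : g x = f x := by
    have := (mem_Wfg f g).1 hx 0
    rw [pow_zero, Module.End.one_eq_id, id_apply, LinearMap.sub_apply, sub_eq_zero] at this
    exact this.symm
  rw [h0]
  exact Wfg_map_f f g ⟨x, hx, rfl⟩

lemma Wfg_ker_inf (m : ℕ) : ker (f ^ m) ⊓ Wfg f g = ker (g ^ m) ⊓ Wfg f g := by
  ext x
  simp only [Submodule.mem_inf, LinearMap.mem_ker]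
  constructor
  · rintro ⟨hx1, hx2⟩
    exact ⟨by rw [← Wfg_pow_eq f g x hx2 m]; exact hx1, hx2⟩
  · rintro ⟨hx1, hx2⟩
    exact ⟨by rw [Wfg_pow_eq f g x hx2 m]; exact hx1, hx2⟩

lemma Wfg_comap_bound :
    finrank ℂ ((Wfg f g).comap f) ≤ finrank ℂ (Wfg f g) + finrank ℂ (range (f - g)) := by
  have hsub : (Wfg f g).comap f ⊓ ker (f - g) ≤ Wfg f g := by
    intro x hx
    rw [Submodule.mem_inf] at hx
    obtain ⟨hx1, hx2⟩ := hx
    rw [Submodule.mem_comap, mem_Wfg] at hx1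
    rw [mem_ker] at hx2
    rw [mem_Wfg]
    intro i
    cases i with
    | zero => simpa using hx2
    | succ i =>
        rw [pow_succ_apply'']
        exact hx1 i
  have h := aux_h1 (f - g) ((Wfg f g).comap f)
  have m1 : finrank ℂ (((Wfg f g).comap f).map (f - g)) ≤ finrank ℂ (range (f - g)) :=
    Submodule.finrank_mono map_le_range
  have m2 : finrank ℂ ((Wfg f g).comap f ⊓ ker (f - g) : Submodule ℂ V) ≤
      finrank ℂ (Wfg f g) := Submodule.finrank_mono hsub
  omega

/-- one-sided main inequality -/
lemma oneside (m : ℕ) :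
    finrank ℂ (ker (f ^ (m + 1))) + finrank ℂ (ker (g ^ m)) ≤
      finrank ℂ (ker (f ^ m)) + finrank ℂ (ker (g ^ (m + 1))) +
        finrank ℂ (range (f - g)) := by
  have hkey := key f (Wfg f g) (Wfg_map_f f g) m
  have hcb := Wfg_comap_bound f g
  have he := easy g (Wfg f g) m
  have i1 := Wfg_ker_inf f g m
  have i2 := Wfg_ker_inf f g (m + 1)
  rw [i1, i2] at hkey
  omega

end twoops

section matrixside

variable {n : ℕ}

lemma mulVecLin_pow (M : Matrix (Fin n) (Fin n) ℂ) (m : ℕ) :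
    (M ^ m).mulVecLin = M.mulVecLin ^ m := by
  induction m with
  | zero => simp [Matrix.mulVecLin_one, Module.End.one_eq_id]
  | succ m ih =>
      rw [pow_succ, Matrix.mulVecLin_mul, ih, pow_succ]
      rfl

lemma mulVecLin_sub (M N : Matrix (Fin n) (Fin n) ℂ) :
    (M - N).mulVecLin = M.mulVecLin - N.mulVecLin := by
  ext v
  simp [Matrix.sub_mulVec]

end matrixside

/-- The `m`-th Weyr characteristic of `M` at `λ`:
`dim ker (λI − M)^m − dim ker (λI − M)^(m−1)`. -/
noncomputable def weyr {n : ℕ} (M : Matrix (Fin n) (Fin n) ℂ) (lam : ℂ) (m : ℕ) : ℕ :=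
  Module.finrank ℂ (LinearMap.ker (((lam • (1 : Matrix (Fin n) (Fin n) ℂ) - M) ^ m).mulVecLin)) -
    Module.finrank ℂ (LinearMap.ker (((lam • (1 : Matrix (Fin n) (Fin n) ℂ) - M) ^ (m - 1)).mulVecLin))

/-- A rank-k perturbation changes each Weyr characteristic by at most k. -/
theorem stmt_19 {n : ℕ} (A B : Matrix (Fin n) (Fin n) ℂ)
    (k : ℕ) (h : (A - B).rank = k) (lam : ℂ) (m : ℕ) (hm : 1 ≤ m) :
    |(weyr A lam m : ℤ) - (weyr B lam m : ℤ)| ≤ (k : ℤ) := by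
  obtain ⟨mm, rfl⟩ : ∃ mm, m = mm + 1 := ⟨m - 1, by omega⟩
  set P := lam • (1 : Matrix (Fin n) (Fin n) ℂ) - A with hP
  set Q := lam • (1 : Matrix (Fin n) (Fin n) ℂ) - B with hQ
  set f := P.mulVecLin with hf
  set g := Q.mulVecLin with hg
  have hfg : g - f = (A - B).mulVecLin := by
    rw [hf, hg, ← mulVecLin_sub, hP, hQ]
    congr 1
    abel
  have hgf : f - g = (B - A).mulVecLin := by
    rw [hf, hg, ← mulVecLin_sub, hP, hQ]
    congr 1
    abel
  have hrank1 : finrank ℂ (LinearMap.range (g - f)) = k := by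
    rw [hfg, ← Matrix.rank, h]
  have hrank2 : finrank ℂ (LinearMap.range (f - g)) = k := by
    rw [hgf]
    rw [(neg_sub A B).symm]
    have hneg : (-(A - B)).mulVecLin = -(A - B).mulVecLin := by
      ext v; simp [Matrix.neg_mulVec]
    rw [hneg, LinearMap.range_neg, ← Matrix.rank, h]
  have h1 := oneside f g mm
  have h2 := oneside g f mm
  rw [hrank2] at h1
  rw [hrank1] at h2
  have hwA : weyr A lam (mm + 1) =
      finrank ℂ (LinearMap.ker (f ^ (mm + 1))) - finrank ℂ (LinearMap.ker (f ^ mm)) := by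
    rw [weyr]
    rw [Nat.add_sub_cancel]
    rw [← hP, mulVecLin_pow, mulVecLin_pow, ← hf]
  have hwB : weyr B lam (mm + 1) =
      finrank ℂ (LinearMap.ker (g ^ (mm + 1))) - finrank ℂ (LinearMap.ker (g ^ mm)) := by
    rw [weyr]
    rw [Nat.add_sub_cancel]
    rw [← hQ, mulVecLin_pow, mulVecLin_pow, ← hg]
  have hmono1 : finrank ℂ (LinearMap.ker (f ^ mm)) ≤ finrank ℂ (LinearMap.ker (f ^ (mm + 1))) :=
    Submodule.finrank_mono (ker_pow_le f mm)
  have hmono2 : finrank ℂ (LinearMap.ker (g ^ mm)) ≤ finrank ℂ (LinearMap.ker (g ^ (mm + 1))) :=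
    Submodule.finrank_mono (ker_pow_le g mm)
  rw [hwA, hwB, abs_sub_le_iff]
  constructor <;> [skip; skip] <;>
    · push_cast [Nat.cast_sub hmono1, Nat.cast_sub hmono2]
      omega
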